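/- Theorem 3 (Poisson sampling): Suppose the sampling indicators I_1,…,I_N are mutually independent (Poisson sampling) and that a ≤ 1/(K+1). Then the IHT estimator has mean-squared error no larger than the HT estimator: E[(t̂_IHT − t_y)²] ≤ E[(t̂_HT − t_y)²]. -/

import Mathlib

open MeasureTheory

lemma expect_sq_aux
    {Ω : Type*} [MeasurableSpace Ω] (μ : Measure Ω) [IsProbabilityMeasure μ]
    (N : ℕ) (I : Fin N → Ω → ℝ)
    (hI01 : ∀ k, ∀ ω, I k ω = 0 ∨ I k ω = 1)
    (hImeas : ∀ k, Measurable (I k))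
    (hIindep : ProbabilityTheory.iIndepFun I μ)
    (π : Fin N → ℝ) (hπ : ∀ k, π k = ∫ ω, I k ω ∂μ)
    (d : Fin N → ℝ) (C : ℝ) :
    ∫ ω, (∑ k, d k * I k ω + C) ^ 2 ∂μ
      = (∑ k, d k * π k + C) ^ 2 + ∑ k, d k ^ 2 * (π k * (1 - π k)) := by
  have hIint : ∀ k, Integrable (I k) μ := by
    intro k
    refine (integrable_const (1:ℝ)).mono' (hImeas k).aestronglyMeasurable ?_
    filter_upwards with ω
    rcases hI01 k ω with h | h <;> simp [h]
  have hIIint : ∀ j k, Integrable (fun ω => I j ω * I k ω) μ := by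
    intro j k
    refine (integrable_const (1:ℝ)).mono' ((hImeas j).mul (hImeas k)).aestronglyMeasurable ?_
    filter_upwards with ω
    rcases hI01 j ω with h | h <;> rcases hI01 k ω with h' | h' <;> simp [h, h']
  have hEI : ∀ k, ∫ ω, d k * I k ω ∂μ = d k * π k := by
    intro k
    rw [integral_const_mul, ← hπ k]
  have hEII : ∀ j k, ∫ ω, I j ω * I k ω ∂μ
      = π j * π k + (if j = k then π k - π k * π k else 0) := by
    intro j k
    by_cases h : j = k
    · subst h
      have heq : (fun ω => I j ω * I j ω) = I j := by
        funext ω; rcases hI01 j ω with h' | h' <;> simp [h']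
      rw [heq, ← hπ j, if_pos rfl]; ring
    · rw [if_neg h, add_zero, hπ j, hπ k]
      exact ProbabilityTheory.IndepFun.integral_mul_eq_mul_integral (hIindep.indepFun h) (hIint j).1 (hIint k).1
  have hsq : ∀ ω, (∑ k, d k * I k ω + C) ^ 2
      = (∑ j, ∑ k, (d j * d k) * (I j ω * I k ω))
        + ((2 * C) * (∑ k, d k * I k ω) + C ^ 2) := by
    intro ω
    rw [add_sq, sq, Finset.sum_mul_sum]
    have h2 : ∀ j ∈ Finset.univ, ∀ k ∈ Finset.univ,
        (d j * I j ω) * (d k * I k ω) = (d j * d k) * (I j ω * I k ω) := by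
      intros; ring
    rw [Finset.sum_congr rfl fun j hj => Finset.sum_congr rfl (h2 j hj)]
    ring
  have hint1 : Integrable
      (fun ω => ∑ j, ∑ k, (d j * d k) * (I j ω * I k ω)) μ := by
    apply integrable_finset_sum; intro j _
    apply integrable_finset_sum; intro k _
    exact (hIIint j k).const_mul _
  have hint2 : Integrable (fun ω => (2 * C) * (∑ k, d k * I k ω) + C ^ 2) μ := by
    apply Integrable.add _ (integrable_const _)
    apply Integrable.const_mul
    apply integrable_finset_sum; intro k _
    exact (hIint k).const_mul _
  calc ∫ ω, (∑ k, d k * I k ω + C) ^ 2 ∂μ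
      = ∫ ω, ((∑ j, ∑ k, (d j * d k) * (I j ω * I k ω))
        + ((2 * C) * (∑ k, d k * I k ω) + C ^ 2)) ∂μ :=
        integral_congr_ae (Filter.Eventually.of_forall hsq)
    _ = (∑ j, ∑ k, (d j * d k) * ∫ ω, I j ω * I k ω ∂μ)
        + ((2 * C) * (∑ k, d k * π k) + C ^ 2) := by
        rw [integral_add hint1 hint2]
        congr 1
        · rw [integral_finset_sum _ (fun j _ => integrable_finset_sum _
            (fun k _ => (hIIint j k).const_mul _))]
          refine Finset.sum_congr rfl fun j _ => ?_
          rw [integral_finset_sum _ (fun k _ => (hIIint j k).const_mul _)]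
          exact Finset.sum_congr rfl fun k _ => integral_const_mul _ _
        · rw [integral_add (((integrable_finset_sum _
            (fun k _ => (hIint k).const_mul _))).const_mul _) (integrable_const _),
            integral_const, integral_const_mul,
            integral_finset_sum _ (fun k _ => (hIint k).const_mul _)]
          simp [hEI]
    _ = (∑ k, d k * π k + C) ^ 2 + ∑ k, d k ^ 2 * (π k * (1 - π k)) := by
        have hmain : (∑ j, ∑ k, (d j * d k) * ∫ ω, I j ω * I k ω ∂μ)
            = (∑ k, d k * π k) ^ 2 + ∑ k, d k ^ 2 * (π k - π k * π k) := by
          simp_rw [hEII, mul_add, Finset.sum_add_distrib, mul_ite, mul_zero,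
            Finset.sum_ite_eq, Finset.mem_univ, if_true]
          congr 1
          · rw [sq, Finset.sum_mul_sum]
            refine Finset.sum_congr rfl fun j _ => Finset.sum_congr rfl fun k _ => ?_
            ring
          · exact Finset.sum_congr rfl fun k _ => by ring
        rw [hmain]
        have : ∑ k, d k ^ 2 * (π k - π k * π k) = ∑ k, d k ^ 2 * (π k * (1 - π k)) :=
          Finset.sum_congr rfl fun k _ => by ring
        rw [this]; ring

/-- Theorem 3 (Poisson sampling): under mutually independent sampling indicators and the
threshold condition `a ≤ 1/(K+1)`, the IHT estimator has MSE no larger than the HT estimator. -/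
theorem iht_le_ht_poisson
    {Ω : Type*} [MeasurableSpace Ω] (μ : Measure Ω) [IsProbabilityMeasure μ]
    (N : ℕ) (y : Fin N → ℝ) (I : Fin N → Ω → ℝ)
    (hI01 : ∀ k, ∀ ω, I k ω = 0 ∨ I k ω = 1)
    (hImeas : ∀ k, Measurable (I k))
    (hIindep : ProbabilityTheory.iIndepFun I μ)
    (π : Fin N → ℝ)
    (hπ : ∀ k, π k = ∫ ω, I k ω ∂μ)
    (hπmem : ∀ k, π k ∈ Set.Ioc (0 : ℝ) 1)
    (a : ℝ) (ha : a ∈ Set.Ioc (0 : ℝ) 1)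
    (U2 : Finset (Fin N)) (K : ℕ) (hK : U2.card = K)
    (hU2 : ∀ k ∈ U2, π k ≤ a)
    (haK : a ≤ 1 / ((K : ℝ) + 1))
    (πs : Fin N → ℝ)
    (hπs : ∀ k, πs k = if k ∈ U2 then a else π k) :
    (∫ ω, ((∑ k, I k ω * y k / πs k) - ∑ k, y k) ^ 2 ∂μ)
      ≤ ∫ ω, ((∑ k, I k ω * y k / π k) - ∑ k, y k) ^ 2 ∂μ := by
  have ha0 : (0:ℝ) < a := ha.1
  have hπ0 : ∀ k, (0:ℝ) < π k := fun k => (hπmem k).1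
  have hπs0 : ∀ k, (0:ℝ) < πs k := by
    intro k; rw [hπs k]; split <;> [exact ha0; exact hπ0 k]
  have haK' : a * ((K:ℝ) + 1) ≤ 1 := by
    rw [le_div_iff₀ (by positivity)] at haK; linarith
  -- rewrite both integrands in the canonical form
  have hrw : ∀ w : Fin N → ℝ,
      (fun ω => ((∑ k, I k ω * y k / w k) - ∑ k, y k) ^ 2)
      = fun ω => (∑ k, (y k / w k) * I k ω + (-(∑ k, y k))) ^ 2 := by
    intro w; funext ω
    congr 1
    rw [sub_eq_add_neg]
    congr 1
    exact Finset.sum_congr rfl fun k _ => by ring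
  rw [show (∫ ω, ((∑ k, I k ω * y k / πs k) - ∑ k, y k) ^ 2 ∂μ)
      = ∫ ω, (∑ k, (y k / πs k) * I k ω + (-(∑ k, y k))) ^ 2 ∂μ from by rw [← hrw πs],
    show (∫ ω, ((∑ k, I k ω * y k / π k) - ∑ k, y k) ^ 2 ∂μ)
      = ∫ ω, (∑ k, (y k / π k) * I k ω + (-(∑ k, y k))) ^ 2 ∂μ from by rw [← hrw π],
    expect_sq_aux μ N I hI01 hImeas hIindep π hπ (fun k => y k / πs k) _,
    expect_sq_aux μ N I hI01 hImeas hIindep π hπ (fun k => y k / π k) _]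
  -- HT is unbiased
  have hHTb : ∑ k, y k / π k * π k = ∑ k, y k :=
    Finset.sum_congr rfl fun k _ => div_mul_cancel₀ _ (hπ0 k).ne'
  rw [hHTb, add_neg_cancel]
  -- the bias of IHT
  set c : Fin N → ℝ := fun k => (a - π k) / a with hc
  have hbias : ∑ k, y k / πs k * π k + (-(∑ k, y k)) = -(∑ k ∈ U2, c k * y k) := by
    have h1 : ∑ k, (y k / πs k * π k - y k) = ∑ k ∈ U2, (y k / πs k * π k - y k) := by
      refine (Finset.sum_subset (Finset.subset_univ U2) fun k _ hk => ?_).symm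
      rw [hπs k, if_neg hk, div_mul_cancel₀ _ (hπ0 k).ne', sub_self]
    have h2 : ∑ k ∈ U2, (y k / πs k * π k - y k) = -(∑ k ∈ U2, c k * y k) := by
      rw [← Finset.sum_neg_distrib]
      refine Finset.sum_congr rfl fun k hk => ?_
      rw [hπs k, if_pos hk, hc]
      field_simp
      ring
    rw [← h2, ← h1, Finset.sum_sub_distrib]
    ring
  rw [hbias, neg_sq]
  -- reduce to the key inequality
  have hdiff : ∑ k, (y k / π k) ^ 2 * (π k * (1 - π k))
      - ∑ k, (y k / πs k) ^ 2 * (π k * (1 - π k))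
      = ∑ k ∈ U2, ((y k / π k) ^ 2 * (π k * (1 - π k))
          - (y k / πs k) ^ 2 * (π k * (1 - π k))) := by
    rw [← Finset.sum_sub_distrib]
    refine (Finset.sum_subset (Finset.subset_univ U2) fun k _ hk => ?_).symm
    rw [hπs k, if_neg hk, sub_self]
  have hc_nonneg : ∀ k ∈ U2, 0 ≤ c k := fun k hk =>
    div_nonneg (by linarith [hU2 k hk]) ha0.le
  have hc_le_one : ∀ k ∈ U2, c k ≤ 1 := by
    intro k hk
    rw [hc, div_le_one ha0]
    linarith [hπ0 k]
  have hCS : (∑ k ∈ U2, c k * y k) ^ 2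
      ≤ (∑ k ∈ U2, c k) * ∑ k ∈ U2, c k * y k ^ 2 := by
    refine Finset.sum_sq_le_sum_mul_sum_of_sq_eq_mul U2 hc_nonneg
      (fun k hk => mul_nonneg (hc_nonneg k hk) (sq_nonneg _)) fun k hk => by ring
  have hsumc : ∑ k ∈ U2, c k ≤ (K:ℝ) := by
    calc ∑ k ∈ U2, c k ≤ ∑ k ∈ U2, (1:ℝ) := Finset.sum_le_sum hc_le_one
      _ = (K:ℝ) := by rw [Finset.sum_const, hK]; simp
  have hsumcy : 0 ≤ ∑ k ∈ U2, c k * y k ^ 2 :=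
    Finset.sum_nonneg fun k hk => mul_nonneg (hc_nonneg k hk) (sq_nonneg _)
  have hpoint : ∀ k ∈ U2, (K:ℝ) * (c k * y k ^ 2)
      ≤ (y k / π k) ^ 2 * (π k * (1 - π k)) - (y k / πs k) ^ 2 * (π k * (1 - π k)) := by
    intro k hk
    have hπk := hπ0 k
    have hπka := hU2 k hk
    have hπk1 := (hπmem k).2
    have ha1 := ha.2
    rw [hπs k, if_pos hk, hc]
    have hfac : 0 ≤ (1 - π k) * (a + π k) - (K:ℝ) * (π k * a) := by
      nlinarith [mul_le_mul_of_nonneg_left haK' hπk.le,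
        mul_self_le_mul_self hπk.le hπka, mul_le_of_le_one_left ha0.le ha1]
    have e1 : (y k / π k) ^ 2 * (π k * (1 - π k)) - (y k / a) ^ 2 * (π k * (1 - π k))
        - (K:ℝ) * ((a - π k) / a * y k ^ 2)
        = (((1 - π k) * (a + π k) - (K:ℝ) * (π k * a)) * (a - π k)) * y k ^ 2
          / (π k * a ^ 2) := by
      field_simp
      ring
    have e2 : 0 ≤ (((1 - π k) * (a + π k) - (K:ℝ) * (π k * a)) * (a - π k)) * y k ^ 2
        / (π k * a ^ 2) := by
      apply div_nonneg _ (by positivity)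
      exact mul_nonneg (mul_nonneg hfac (by linarith)) (sq_nonneg _)
    linarith [e1 ▸ e2]
  have hchain : (∑ k ∈ U2, c k * y k) ^ 2
      ≤ ∑ k, (y k / π k) ^ 2 * (π k * (1 - π k))
        - ∑ k, (y k / πs k) ^ 2 * (π k * (1 - π k)) := by
    rw [hdiff]
    calc (∑ k ∈ U2, c k * y k) ^ 2
        ≤ (∑ k ∈ U2, c k) * ∑ k ∈ U2, c k * y k ^ 2 := hCS
      _ ≤ (K:ℝ) * ∑ k ∈ U2, c k * y k ^ 2 := mul_le_mul_of_nonneg_right hsumc hsumcy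
      _ = ∑ k ∈ U2, (K:ℝ) * (c k * y k ^ 2) := Finset.mul_sum _ _ _
      _ ≤ _ := Finset.sum_le_sum hpoint
  linarith [hchain]
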